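/- Consider a closed tandem (ring) of L ≥ 2 queues indexed by i ∈ ℤ/Lℤ. Each queue has countable single-queue state space E, with functions n : E → ℕ (number of clients) and μ : E → ℝ≥0 (service rate). For each i let p_i^-(z,z') ≥ 0 be departure-routing probabilities supported on pairs with n(z') = n(z) − 1 and satisfying ∑_{z'} p_i^-(z,z') = 1 whenever n(z) ≥ 1; let p_i^+(z,z') ≥ 0 be arrival-routing probabilities supported on pairs with n(z') = n(z) + 1 and satisfying ∑_{z'} p_i^+(z,z') = 1; let q_i^0(z,z') ≥ 0 be internal transition rates supported on pairs with n(z') = n(z); and let π_i : E → ℝ>0 be a strictly positive weight. Fix λ > 0 and assume all displayed infinite sums converge absolutely. If for every i and every z_i ∈ E the partial balance equations hold: (a) ∑_{z : n(z) = n(z_i)+1} μ(z) p_i^-(z, z_i) π_i(z) = λ π_i(z_i), and (b) μ(z_i) π_i(z_i) + ∑_{z : n(z) = n(z_i)} q_i^0(z_i, z) π_i(z_i) = ∑_{z : n(z) = n(z_i)−1} λ p_i^+(z, z_i) π_i(z) + ∑_{z : n(z) = n(z_i)} q_i^0(z, z_i) π_i(z), then the product weight satisfies the global balance equation of the tandem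 dynamics: for every configuration (z_0, …, z_{L−1}) ∈ E^L, ∑_{i} ∑_{z' : n(z')=n(z_i)+1} ∑_{z'' : n(z'')=n(z_{i+1})−1} μ(z') p_i^-(z', z_i) p_{i+1}^+(z'', z_{i+1}) π_i(z') π_{i+1}(z'') ∏_{j ≠ i, i+1} π_j(z_j) + ∑_i ∑_{z : n(z)=n(z_i)} q_i^0(z, z_i) π_i(z) ∏_{j ≠ i} π_j(z_j) = ( ∑_i μ(z_i) + ∑_i ∑_{z : n(z)=n(z_i)} q_i^0(z_i, z) ) ∏_j π_j(z_j), where indices are taken modulo L. -/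

import Mathlib

open scoped BigOperators

/-- Product-form stationarity for a closed tandem of queues with stochastic
service rates: partial balance for each queue in isolation implies global
balance of the product weight on the ring. -/
theorem tandem_partial_balance_implies_global_balance
    (L : ℕ) [NeZero L] (hL : 2 ≤ L)
    (E : Type*) [Countable E]
    (n : E → ℕ) (μ : E → ℝ)
    (pminus pplus : ZMod L → E → E → ℝ)
    (q0 : ZMod L → E → E → ℝ)
    (π : ZMod L → E → ℝ)
    (lam : ℝ) (hlam : 0 < lam)
    (hμ_nonneg : ∀ z, 0 ≤ μ z)
    (hpminus_nonneg : ∀ i z z', 0 ≤ pminus i z z')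
    (hpplus_nonneg : ∀ i z z', 0 ≤ pplus i z z')
    (hq0_nonneg : ∀ i z z', 0 ≤ q0 i z z')
    (hπ_pos : ∀ i z, 0 < π i z)
    -- support conditions
    (hpminus_supp : ∀ i z z', pminus i z z' ≠ 0 → n z' + 1 = n z)
    (hpplus_supp : ∀ i z z', pplus i z z' ≠ 0 → n z' = n z + 1)
    (hq0_supp : ∀ i z z', q0 i z z' ≠ 0 → n z' = n z)
    -- normalization of the routing probabilities
    (hpminus_sum : ∀ i z, 1 ≤ n z → ∑' z', pminus i z z' = 1)
    (hpplus_sum : ∀ i z, ∑' z', pplus i z z' = 1)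
    -- absolute convergence of all displayed sums
    (hsum_a : ∀ i zi, Summable (fun z =>
      if n z = n zi + 1 then μ z * pminus i z zi * π i z else 0))
    (hsum_b1 : ∀ i zi, Summable (fun z => if n z = n zi then q0 i zi z else 0))
    (hsum_b2 : ∀ i zi, Summable (fun z =>
      if n z + 1 = n zi then lam * pplus i z zi * π i z else 0))
    (hsum_b3 : ∀ i zi, Summable (fun z =>
      if n z = n zi then q0 i z zi * π i z else 0))
    (hsum_c : ∀ (i : ZMod L) (c : ZMod L → E), Summable (fun p : E × E =>
      if n p.1 = n (c i) + 1 ∧ n p.2 + 1 = n (c (i + 1)) then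
        μ p.1 * pminus i p.1 (c i) * pplus (i + 1) p.2 (c (i + 1)) *
          π i p.1 * π (i + 1) p.2
      else 0))
    -- partial balance equation (a)
    (hpb_a : ∀ i zi,
      (∑' z, if n z = n zi + 1 then μ z * pminus i z zi * π i z else 0)
        = lam * π i zi)
    -- partial balance equation (b)
    (hpb_b : ∀ i zi,
      μ zi * π i zi + (∑' z, if n z = n zi then q0 i zi z * π i zi else 0)
        = (∑' z, if n z + 1 = n zi then lam * pplus i z zi * π i z else 0)
          + ∑' z, if n z = n zi then q0 i z zi * π i z else 0) :
    -- global balance for every configuration of the ring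
    ∀ c : ZMod L → E,
      (∑ i : ZMod L,
        (∑' p : E × E,
          if n p.1 = n (c i) + 1 ∧ n p.2 + 1 = n (c (i + 1)) then
            μ p.1 * pminus i p.1 (c i) * pplus (i + 1) p.2 (c (i + 1)) *
              π i p.1 * π (i + 1) p.2
          else 0) * ∏ j ∈ (Finset.univ.erase i).erase (i + 1), π j (c j))
      + (∑ i : ZMod L,
          (∑' z, if n z = n (c i) then q0 i z (c i) * π i z else 0)
            * ∏ j ∈ Finset.univ.erase i, π j (c j))
      = ((∑ i : ZMod L, μ (c i))
          + ∑ i : ZMod L, ∑' z, if n z = n (c i) then q0 i (c i) z else 0)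
        * ∏ j : ZMod L, π j (c j) := by
  
  intro c
  haveI : Fact (1 < L) := ⟨hL⟩
  have hlam' : lam ≠ 0 := ne_of_gt hlam
  have hne : ∀ i : ZMod L, i ≠ i + 1 := by
    intro i h
    exact one_ne_zero (left_eq_add.mp h)
  -- factorization of the double sum
  have key : ∀ i : ZMod L,
      (∑' p : E × E,
        if n p.1 = n (c i) + 1 ∧ n p.2 + 1 = n (c (i + 1)) then
          μ p.1 * pminus i p.1 (c i) * pplus (i + 1) p.2 (c (i + 1)) *
            π i p.1 * π (i + 1) p.2
        else 0) = π i (c i) *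
          ∑' z, if n z + 1 = n (c (i + 1)) then
            lam * pplus (i + 1) z (c (i + 1)) * π (i + 1) z else 0 := by
    intro i
    set f : E → ℝ := fun z =>
      if n z = n (c i) + 1 then μ z * pminus i z (c i) * π i z else 0 with hf
    set g : E → ℝ := fun z =>
      if n z + 1 = n (c (i + 1)) then pplus (i + 1) z (c (i + 1)) * π (i + 1) z else 0 with hg
    have hfs : Summable f := hsum_a i (c i)
    have hgeq : ∀ z, (if n z + 1 = n (c (i + 1)) then
        lam * pplus (i + 1) z (c (i + 1)) * π (i + 1) z else 0) / lam = g z := by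
      intro z
      by_cases h : n z + 1 = n (c (i + 1)) <;> simp [hf, hg, h] <;> field_simp <;> ring
    have hgs : Summable g := ((hsum_b2 (i + 1) (c (i + 1))).div_const lam).congr hgeq
    have heq : ∀ p : E × E,
        (if n p.1 = n (c i) + 1 ∧ n p.2 + 1 = n (c (i + 1)) then
          μ p.1 * pminus i p.1 (c i) * pplus (i + 1) p.2 (c (i + 1)) *
            π i p.1 * π (i + 1) p.2
        else 0) = f p.1 * g p.2 := by
      intro p
      by_cases h1 : n p.1 = n (c i) + 1 <;> by_cases h2 : n p.2 + 1 = n (c (i + 1)) <;>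
        simp [hf, hg, h1, h2] <;> ring
    have hfnorm : Summable fun z => ‖f z‖ := by
      simpa [Real.norm_eq_abs] using hfs.abs
    have hgnorm : Summable fun z => ‖g z‖ := by
      simpa [Real.norm_eq_abs] using hgs.abs
    rw [tsum_congr heq, ← tsum_mul_tsum_of_summable_norm hfnorm hgnorm]
    have h1 : ∑' z, f z = lam * π i (c i) := hpb_a i (c i)
    have h2 : ∑' z, g z = (∑' z, if n z + 1 = n (c (i + 1)) then
        lam * pplus (i + 1) z (c (i + 1)) * π (i + 1) z else 0) / lam := by
      rw [← tsum_congr hgeq, tsum_div_const]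
    rw [h1, h2]
    field_simp
  -- absorb π i (c i) into the doubly-erased product
  have habsorb : ∀ i : ZMod L,
      π i (c i) * ∏ j ∈ (Finset.univ.erase i).erase (i + 1), π j (c j)
        = ∏ j ∈ Finset.univ.erase (i + 1), π j (c j) := by
    intro i
    rw [Finset.erase_right_comm]
    exact Finset.mul_prod_erase (Finset.univ.erase (i + 1)) (fun j => π j (c j))
      (Finset.mem_erase.mpr ⟨hne i, Finset.mem_univ i⟩)
  -- rewrite the first big sum
  have step1 : ∑ i : ZMod L,
      (∑' p : E × E,
        if n p.1 = n (c i) + 1 ∧ n p.2 + 1 = n (c (i + 1)) then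
          μ p.1 * pminus i p.1 (c i) * pplus (i + 1) p.2 (c (i + 1)) *
            π i p.1 * π (i + 1) p.2
        else 0) * ∏ j ∈ (Finset.univ.erase i).erase (i + 1), π j (c j)
      = ∑ i : ZMod L,
        (∑' z, if n z + 1 = n (c (i + 1)) then
            lam * pplus (i + 1) z (c (i + 1)) * π (i + 1) z else 0)
          * ∏ j ∈ Finset.univ.erase (i + 1), π j (c j) :=
    Finset.sum_congr rfl fun i _ => by
      rw [key i, mul_right_comm, habsorb i, mul_comm]
  have step2 : ∑ i : ZMod L,
        (∑' z, if n z + 1 = n (c (i + 1)) then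
            lam * pplus (i + 1) z (c (i + 1)) * π (i + 1) z else 0)
          * ∏ j ∈ Finset.univ.erase (i + 1), π j (c j)
      = ∑ i : ZMod L,
        (∑' z, if n z + 1 = n (c i) then lam * pplus i z (c i) * π i z else 0)
          * ∏ j ∈ Finset.univ.erase i, π j (c j) :=
    Fintype.sum_equiv (Equiv.addRight (1 : ZMod L)) _ _ (fun i => rfl)
  rw [step1, step2, ← Finset.sum_add_distrib]
  -- rewrite the right-hand side as a sum over i
  have hprod : ∀ i : ZMod L,
      ∏ j : ZMod L, π j (c j) = π i (c i) * ∏ j ∈ Finset.univ.erase i, π j (c j) :=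
    fun i => (Finset.mul_prod_erase _ _ (Finset.mem_univ i)).symm
  have hr : ((∑ i : ZMod L, μ (c i))
        + ∑ i : ZMod L, ∑' z, if n z = n (c i) then q0 i (c i) z else 0)
        * ∏ j : ZMod L, π j (c j)
      = ∑ i : ZMod L,
          (μ (c i) * π i (c i)
            + (∑' z, if n z = n (c i) then q0 i (c i) z else 0) * π i (c i))
          * ∏ j ∈ Finset.univ.erase i, π j (c j) := by
    rw [add_mul, Finset.sum_mul, Finset.sum_mul, ← Finset.sum_add_distrib]
    refine Finset.sum_congr rfl fun i _ => ?_
    rw [hprod i]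
    ring
  rw [hr]
  refine Finset.sum_congr rfl fun i _ => ?_
  have hq : (∑' z, if n z = n (c i) then q0 i (c i) z * π i (c i) else 0)
      = (∑' z, if n z = n (c i) then q0 i (c i) z else 0) * π i (c i) := by
    rw [← tsum_mul_right]
    exact tsum_congr fun z => by by_cases h : n z = n (c i) <;> simp [h]
  have hb := hpb_b i (c i)
  rw [hq] at hb
  rw [← add_mul, ← hb]
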